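/- For p > 1 and r, s ∈ (0,1), sinh_p(√(rs)) ≤ √(sinh_p(r) · sinh_p(s)), where sinh_p is the inverse of arcsinh_p(x) = ∫_0^x (1+t^p)^(-1/p) dt. -/

import Mathlib

open Real Set intervalIntegral MeasureTheory

namespace SinhAux
variable {p : ℝ}

noncomputable def phi (p t : ℝ) : ℝ := (1 + t ^ p) ^ (-1/p)
noncomputable def f (p x : ℝ) : ℝ := ∫ t in (0:ℝ)..x, (1 + t ^ p) ^ (-1/p)

lemma f_eq (x : ℝ) : f p x = ∫ t in (0:ℝ)..x, phi p t := rfl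

lemma one_le_base (hp : 0 < p) {t : ℝ} (ht : 0 ≤ t) : 1 ≤ 1 + t ^ p := by
  nlinarith [Real.rpow_nonneg ht p]

lemma base_pos (hp : 0 < p) {t : ℝ} (ht : 0 ≤ t) : 0 < 1 + t ^ p :=
  lt_of_lt_of_le one_pos (one_le_base hp ht)

lemma phi_pos (hp : 0 < p) {t : ℝ} (ht : 0 ≤ t) : 0 < phi p t :=
  Real.rpow_pos_of_pos (base_pos hp ht) _

lemma phi_le_one (hp : 0 < p) {t : ℝ} (ht : 0 ≤ t) : phi p t ≤ 1 :=
  Real.rpow_le_one_of_one_le_of_nonpos (one_le_base hp ht)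
    (by rw [neg_div]; exact neg_nonpos.2 (by positivity))

lemma phi_anti (hp : 0 < p) : AntitoneOn (phi p) (Ici 0) := by
  intro a ha b hb hab
  exact Real.rpow_le_rpow_of_nonpos (base_pos hp ha)
    (by have := Real.rpow_le_rpow ha hab hp.le; linarith)
    (by rw [neg_div]; exact neg_nonpos.2 (by positivity))

lemma phi_contAt (hp : 0 < p) {t : ℝ} (ht : 0 ≤ t) : ContinuousAt (phi p) t := by
  have h1 : ContinuousAt (fun t : ℝ => 1 + t ^ p) t :=
    continuousAt_const.add (Real.continuousAt_rpow_const t p (Or.inr hp.le))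
  exact h1.rpow_const (Or.inl (base_pos hp ht).ne')

lemma phi_intble (hp : 0 < p) {a b : ℝ} (ha : 0 ≤ a) (hb : 0 ≤ b) :
    IntervalIntegrable (phi p) volume a b := by
  apply ContinuousOn.intervalIntegrable
  intro t htI
  have ht : 0 ≤ t := by
    rcases le_total a b with h | h
    · rw [uIcc_of_le h] at htI; exact le_trans ha htI.1
    · rw [uIcc_of_ge h] at htI; exact le_trans hb htI.1
  exact (phi_contAt hp ht).continuousWithinAt

lemma f_zero : f p 0 = 0 := intervalIntegral.integral_same

lemma f_add (hp : 0 < p) {a b : ℝ} (ha : 0 ≤ a) (hab : a ≤ b) :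
    f p b = f p a + ∫ t in a..b, phi p t := by
  rw [f_eq, f_eq, intervalIntegral.integral_add_adjacent_intervals
    (phi_intble hp le_rfl ha) (phi_intble hp ha (ha.trans hab))]

lemma f_strictMono (hp : 0 < p) : StrictMonoOn (f p) (Ici 0) := by
  intro a ha b hb hab
  rw [f_add hp ha hab.le]
  have hpos : 0 < ∫ t in a..b, phi p t := by
    apply intervalIntegral.intervalIntegral_pos_of_pos_on
      (phi_intble hp ha (le_trans ha hab.le))
    · intro t ht
      exact phi_pos hp (le_trans ha ht.1.le)
    · exact hab
  linarith

lemma f_pos (hp : 0 < p) {x : ℝ} (hx : 0 < x) : 0 < f p x := by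
  have := f_strictMono hp (self_mem_Ici) (le_of_lt hx : (0:ℝ) ≤ x) hx
  rwa [f_zero] at this

lemma f_le_self (hp : 0 < p) {x : ℝ} (hx : 0 ≤ x) : f p x ≤ x := by
  rw [f_eq]
  calc (∫ t in (0:ℝ)..x, phi p t) ≤ ∫ _t in (0:ℝ)..x, (1:ℝ) := by
        apply intervalIntegral.integral_mono_on hx (phi_intble hp le_rfl hx)
          intervalIntegrable_const
        intro t ht; exact phi_le_one hp ht.1
    _ = x := by simp

lemma f_ge (hp : 0 < p) {x : ℝ} (hx : 0 ≤ x) : x * phi p x ≤ f p x := by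
  rw [f_eq]
  calc x * phi p x = ∫ _t in (0:ℝ)..x, phi p x := by simp [mul_comm]
    _ ≤ ∫ t in (0:ℝ)..x, phi p t := by
        apply intervalIntegral.integral_mono_on hx intervalIntegrable_const
          (phi_intble hp le_rfl hx)
        intro t ht; exact phi_anti hp ht.1 hx ht.2
    
lemma f_hasDerivAt (hp : 0 < p) {x : ℝ} (hx : 0 < x) :
    HasDerivAt (f p) (phi p x) x := by
  have hmeas : StronglyMeasurableAtFilter (phi p) (nhds x) := by
    apply ContinuousOn.stronglyMeasurableAtFilter isOpen_Ioi
      (fun t ht => (phi_contAt hp (le_of_lt ht)).continuousWithinAt)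
    exact hx
  exact intervalIntegral.integral_hasDerivAt_right (phi_intble hp le_rfl hx.le)
    hmeas (phi_contAt hp hx.le)

lemma f_contOn (hp : 0 < p) {X : ℝ} (hX : 0 ≤ X) : ContinuousOn (f p) (Icc 0 X) := by
  have h : ContinuousOn (fun x => ∫ t in (0:ℝ)..x, phi p t) (uIcc 0 X) := by
    apply intervalIntegral.continuousOn_primitive_interval
    apply ContinuousOn.integrableOn_compact isCompact_uIcc
    intro t ht
    rw [uIcc_of_le hX] at ht
    exact (phi_contAt hp ht.1).continuousWithinAt
  rw [uIcc_of_le hX] at h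
  exact h

lemma exists_f_eq (hp : 1 < p) {r : ℝ} (hr0 : 0 < r) (hr1 : r < 1) :
    ∃ x, 0 < x ∧ f p x = r := by
  have hp0 : 0 < p := by linarith
  have hrp : 1 < r ^ (-p) :=
    (Real.one_lt_rpow_iff_of_pos hr0).2 (Or.inr ⟨hr1, by linarith⟩)
  set A := r ^ (-p) - 1 with hAdef
  have hA : 0 < A := by rw [hAdef]; linarith
  set X := A ^ (-1/p) with hXdef
  have hXpos : 0 < X := Real.rpow_pos_of_pos hA _
  have hXp : X ^ p = A⁻¹ := by
    rw [hXdef, ← Real.rpow_mul hA.le, show (-1/p) * p = -1 by field_simp,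
      Real.rpow_neg_one]
  have hbase : 1 + X ^ p = r ^ (-p) / A := by
    rw [hXp]
    field_simp [hAdef]
    linarith [hAdef]
  have hphi : X * phi p X = r := by
    rw [phi, hbase, Real.div_rpow (by positivity) hA.le,
      ← Real.rpow_mul hr0.le, show (-p) * (-1/p) = 1 by field_simp,
      Real.rpow_one, ← hXdef]
    field_simp
  have hrX : r ≤ f p X := hphi ▸ f_ge hp0 hXpos.le
  have hmem : r ∈ Icc (f p 0) (f p X) := by rw [f_zero]; exact ⟨hr0.le, hrX⟩
  obtain ⟨x, hxI, hxr⟩ := intermediate_value_Icc hXpos.le (f_contOn hp0 hXpos.le) hmem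
  refine ⟨x, ?_, hxr⟩
  rcases hxI.1.lt_or_eq with h | h
  · exact h
  · exfalso; rw [← h, f_zero] at hxr; linarith

lemma N_hasDerivAt (hp : 1 < p) {x : ℝ} (hx : 0 < x) :
    HasDerivAt (fun x => x * phi p x) ((1 + x ^ p) ^ (-1/p - 1)) x := by
  have hp0 : 0 < p := by linarith
  have hin : HasDerivAt (fun x : ℝ => 1 + x ^ p) (p * x ^ (p-1)) x := by
    simpa using (Real.hasDerivAt_rpow_const (x := x) (p := p) (Or.inl hx.ne')).const_add 1
  have hphi : HasDerivAt (fun x : ℝ => (1 + x ^ p) ^ (-1/p))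
      (p * x ^ (p-1) * (-1/p) * (1 + x ^ p) ^ (-1/p - 1)) x :=
    hin.rpow_const (Or.inl (base_pos hp0 hx.le).ne')
  have h : HasDerivAt (fun y : ℝ => y * phi p y)
      (1 * (1 + x ^ p) ^ (-1/p) + x * (p * x ^ (p-1) * (-1/p) * (1 + x ^ p) ^ (-1/p - 1))) x :=
    (hasDerivAt_id' x).mul hphi
  have hxx : x * x ^ (p - 1) = x ^ p := by
    have h2 := Real.rpow_add hx 1 (p-1)
    rw [show (1:ℝ) + (p-1) = p by ring] at h2
    rw [h2, Real.rpow_one]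
  have hsplit : (1 + x ^ p) ^ (-1/p) = (1 + x ^ p) ^ (-1/p - 1) * (1 + x ^ p) := by
    have h3 := Real.rpow_add_one (base_pos hp0 hx.le).ne' (-1/p - 1)
    rw [show (-1/p - 1) + 1 = -1/p by ring] at h3
    exact h3
  have key : x * (p * x ^ (p-1) * (-1/p) * (1 + x ^ p) ^ (-1/p - 1))
      = -((1 + x ^ p) ^ (-1/p - 1)) * x ^ p := by
    rw [← hxx]; field_simp
  convert h using 1
  rw [one_mul, hsplit, key]; ring

lemma G_hasDerivAt (hp : 1 < p) {x : ℝ} (hx : 0 < x) :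
    HasDerivAt (fun x => x * phi p x / f p x)
      (((1 + x ^ p) ^ (-1/p - 1) * f p x - x * phi p x * phi p x) / (f p x) ^ 2) x := by
  have hp0 : 0 < p := by linarith
  exact (N_hasDerivAt hp hx).div (f_hasDerivAt hp0 hx) (f_pos hp0 hx).ne'

lemma G_anti (hp : 1 < p) : AntitoneOn (fun x => x * phi p x / f p x) (Ioi 0) := by
  have hp0 : 0 < p := by linarith
  apply antitoneOn_of_deriv_nonpos (convex_Ioi 0)
  · intro x hx
    exact ((G_hasDerivAt hp hx).differentiableAt).continuousAt.continuousWithinAt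
  · rw [interior_Ioi]
    intro x hx
    exact ((G_hasDerivAt hp hx).differentiableAt).differentiableWithinAt
  · rw [interior_Ioi]
    intro x hx
    rw [(G_hasDerivAt hp hx).deriv]
    apply div_nonpos_of_nonpos_of_nonneg _ (sq_nonneg _)
    have h1 : (1 + x ^ p) ^ (-1/p - 1) * f p x ≤ (1 + x ^ p) ^ (-1/p - 1) * x :=
      mul_le_mul_of_nonneg_left (f_le_self hp0 (le_of_lt hx))
        (Real.rpow_nonneg (base_pos hp0 (le_of_lt hx)).le _)
    have hexpo : -1/p - 1 ≤ -2/p := by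
      have h1p : 1/p ≤ 1 := by rw [div_le_one hp0]; exact hp.le
      have h2 : (2:ℝ)/p = 2*(1/p) := by ring
      have h3 : (-1:ℝ)/p = -(1/p) := by ring
      have h4 : (-2:ℝ)/p = -(2*(1/p)) := by ring
      rw [h3, h4]; linarith
    have h2 : (1 + x ^ p) ^ (-1/p - 1) ≤ (1 + x ^ p) ^ (-2/p) :=
      Real.rpow_le_rpow_of_exponent_le (one_le_base hp0 (le_of_lt hx)) hexpo
    have h3 : phi p x * phi p x = (1 + x ^ p) ^ (-2/p) := by
      rw [phi, ← Real.rpow_add (base_pos hp0 (le_of_lt hx))]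
      norm_num
      ring_nf
    have h4 : (1 + x ^ p) ^ (-1/p - 1) * x ≤ x * (phi p x * phi p x) := by
      rw [h3, mul_comm x]
      exact mul_le_mul_of_nonneg_right h2 (le_of_lt hx)
    nlinarith

lemma F_hasDerivAt (hp : 1 < p) (u : ℝ) :
    HasDerivAt (fun u => Real.log (f p (Real.exp u)))
      (Real.exp u * phi p (Real.exp u) / f p (Real.exp u)) u := by
  have hp0 : 0 < p := by linarith
  have h1 := (f_hasDerivAt hp0 (Real.exp_pos u)).comp u (Real.hasDerivAt_exp u)
  have h2 : HasDerivAt (fun u => Real.log (f p (Real.exp u)))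
      ((phi p (Real.exp u) * Real.exp u) / f p (Real.exp u)) u :=
    h1.log (f_pos hp0 (Real.exp_pos u)).ne'
  convert h2 using 1
  ring

lemma F_concave (hp : 1 < p) :
    ConcaveOn ℝ univ (fun u => Real.log (f p (Real.exp u))) := by
  apply AntitoneOn.concaveOn_of_deriv convex_univ
  · intro u _
    exact (F_hasDerivAt hp u).differentiableAt.continuousAt.continuousWithinAt
  · rw [interior_univ]
    intro u _
    exact (F_hasDerivAt hp u).differentiableAt.differentiableWithinAt
  · rw [interior_univ]
    intro u _ v _ huv
    rw [(F_hasDerivAt hp u).deriv, (F_hasDerivAt hp v).deriv]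
    exact G_anti hp (Real.exp_pos u) (Real.exp_pos v) (Real.exp_le_exp.2 huv)

lemma key_ineq (hp : 1 < p) {x y : ℝ} (hx : 0 < x) (hy : 0 < y) :
    Real.sqrt (f p x * f p y) ≤ f p (Real.sqrt (x * y)) := by
  have hp0 : 0 < p := by linarith
  have hxy : (0:ℝ) < x * y := mul_pos hx hy
  have hsq : (0:ℝ) < Real.sqrt (x * y) := Real.sqrt_pos.2 hxy
  have hc := (F_concave hp).2 (mem_univ (Real.log x)) (mem_univ (Real.log y))
      (by norm_num : (0:ℝ) ≤ 1/2) (by norm_num : (0:ℝ) ≤ 1/2) (by norm_num)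
  have hexp : Real.exp ((1/2:ℝ) * Real.log x + (1/2:ℝ) * Real.log y)
      = Real.sqrt (x * y) := by
    rw [show (1/2:ℝ) * Real.log x + (1/2:ℝ) * Real.log y = Real.log (x*y) / 2 by
        rw [Real.log_mul hx.ne' hy.ne']; ring,
      ← Real.log_sqrt hxy.le, Real.exp_log hsq]
  have hfx := f_pos hp0 hx
  have hfy := f_pos hp0 hy
  have hfs := f_pos hp0 hsq
  have h1 : Real.log (Real.sqrt (f p x * f p y)) ≤ Real.log (f p (Real.sqrt (x*y))) := by
    rw [Real.log_sqrt (by positivity), Real.log_mul hfx.ne' hfy.ne']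
    have hc2 := hc
    simp only [smul_eq_mul, Real.exp_log hx, Real.exp_log hy, hexp] at hc2
    linarith
  calc Real.sqrt (f p x * f p y)
      = Real.exp (Real.log (Real.sqrt (f p x * f p y))) :=
        (Real.exp_log (Real.sqrt_pos.2 (by positivity))).symm
    _ ≤ Real.exp (Real.log (f p (Real.sqrt (x*y)))) := Real.exp_le_exp.2 h1
    _ = f p (Real.sqrt (x*y)) := Real.exp_log hfs

end SinhAux

open SinhAux in
theorem sinh_p_sqrt_ineq (p : ℝ) (hp : 1 < p) (S : ℝ → ℝ)
    (hS : ∀ x ∈ Set.Ici (0:ℝ),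
      S (∫ t in (0:ℝ)..x, (1 + t ^ p) ^ (-1/p)) = x) :
    ∀ r ∈ Set.Ioo (0:ℝ) 1, ∀ s ∈ Set.Ioo (0:ℝ) 1,
      S (Real.sqrt (r * s)) ≤ Real.sqrt (S r * S s) := by
  intro r hr s hs
  have hp0 : 0 < p := by linarith
  obtain ⟨x, hx, hfx⟩ := exists_f_eq hp hr.1 hr.2
  obtain ⟨y, hy, hfy⟩ := exists_f_eq hp hs.1 hs.2
  have hrs0 : 0 < r * s := mul_pos hr.1 hs.1
  have hrs1 : Real.sqrt (r * s) < 1 := by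
    rw [show (1:ℝ) = Real.sqrt 1 by simp]
    exact Real.sqrt_lt_sqrt hrs0.le (by nlinarith [hr.1, hr.2, hs.1, hs.2])
  obtain ⟨z, hz, hfz⟩ := exists_f_eq hp (Real.sqrt_pos.2 hrs0) hrs1
  have hSr : S r = x := by rw [← hfx]; exact hS x hx.le
  have hSs : S s = y := by rw [← hfy]; exact hS y hy.le
  have hSz : S (Real.sqrt (r * s)) = z := by rw [← hfz]; exact hS z hz.le
  have hkey := key_ineq hp hx hy
  have hle : f p z ≤ f p (Real.sqrt (x * y)) := by
    rw [hfz, ← hfx, ← hfy]; exact hkey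
  have hzle : z ≤ Real.sqrt (x * y) := by
    by_contra h
    push_neg at h
    have := f_strictMono hp0 (Real.sqrt_nonneg (x*y)) (le_of_lt hz) h
    linarith
  rw [hSr, hSs, hSz]
  exact hzle
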